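/- Let V be a braided monoidal category with unit object I and let (A,v,η,ε) be an augmented lax tricocycloid in V. Then the following data form a skew left warping of the monoidal category V: the functor T = A⊗− : V → V; the object K = I; the natural family v_{X,Y} = (1_A⊗c_{A,X}⊗1_Y)∘(v⊗1_X⊗1_Y) : A⊗A⊗X⊗Y → A⊗X⊗A⊗Y; the morphism v₀ = ε : A → I (composed with the unit isomorphism A⊗I ≅ A); and the natural family k_X = η⊗1_X : X → A⊗X (composed with the unit isomorphism A⊗X ≅ A⊗X⊗I). That is, the five skew left warping axioms (W1)–(W5) hold. -/

import Mathlib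

open CategoryTheory MonoidalCategory

variable {V : Type*} [Category V] [MonoidalCategory V]

/-- A skew left warping of the monoidal category `V` (Lack–Street, following Booker–Street):
a functor `T`, an object `K`, natural families `v_{X,Y} : T(TX ⊗ Y) ⟶ TX ⊗ TY` and
`k_X : X ⟶ TX ⊗ K`, and a morphism `v₀ : TK ⟶ I`, satisfying the five warping axioms
(W1)–(W5). -/
def IsSkewLeftWarping (T : V ⥤ V) (K : V)
    (v : ∀ X Y : V, T.obj (T.obj X ⊗ Y) ⟶ T.obj X ⊗ T.obj Y)
    (v₀ : T.obj K ⟶ 𝟙_ V) (k : ∀ X : V, X ⟶ T.obj X ⊗ K) : Prop :=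
  -- naturality of v
  (∀ (X X' Y Y' : V) (f : X ⟶ X') (g : Y ⟶ Y'),
    T.map (T.map f ⊗ₘ g) ≫ v X' Y' = v X Y ≫ (T.map f ⊗ₘ T.map g)) ∧
  -- naturality of k
  (∀ (X X' : V) (f : X ⟶ X'), f ≫ k X' = k X ≫ (T.map f ▷ K)) ∧
  -- (W1)
  (∀ X Y Z : V,
    v (T.obj X ⊗ Y) Z ≫ (v X Y ▷ T.obj Z) ≫ (α_ (T.obj X) (T.obj Y) (T.obj Z)).hom =
      T.map (v X Y ▷ Z) ≫ T.map (α_ (T.obj X) (T.obj Y) Z).hom ≫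
        v X (T.obj Y ⊗ Z) ≫ (T.obj X ◁ v Y Z)) ∧
  -- (W2)
  (∀ Y : V,
    v K Y ≫ (v₀ ▷ T.obj Y) ≫ (λ_ (T.obj Y)).hom =
      T.map (v₀ ▷ Y) ≫ T.map (λ_ Y).hom) ∧
  -- (W3)
  (∀ X : V, T.map (k X) ≫ v X K ≫ (T.obj X ◁ v₀) = (ρ_ (T.obj X)).inv) ∧
  -- (W4)
  (∀ X Y : V,
    k (T.obj X ⊗ Y) ≫ (v X Y ▷ K) ≫ (α_ (T.obj X) (T.obj Y) K).hom =
      T.obj X ◁ k Y) ∧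
  -- (W5)
  (k K ≫ (v₀ ▷ K) ≫ (λ_ K).hom = 𝟙 K)

variable [BraidedCategory V]

set_option maxHeartbeats 1000000
set_option linter.unusedSectionVars false

section TrioAux
def trioU (A : V) (v : A ⊗ A ⟶ A ⊗ A) (X : V) : A ⊗ (A ⊗ X) ⟶ (A ⊗ X) ⊗ A :=
  (α_ A A X).inv ≫ (v ▷ X) ≫ (α_ A A X).hom ≫ (A ◁ (β_ A X).hom) ≫ (α_ A X A).inv

def trioW (A : V) (v : A ⊗ A ⟶ A ⊗ A) (X Y : V) : A ⊗ ((A ⊗ X) ⊗ Y) ⟶ (A ⊗ X) ⊗ (A ⊗ Y) :=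
  (A ◁ (α_ A X Y).hom) ≫ (α_ A A (X ⊗ Y)).inv ≫ (v ▷ (X ⊗ Y)) ≫
    (α_ A A (X ⊗ Y)).hom ≫
    (A ◁ ((α_ A X Y).inv ≫ ((β_ A X).hom ▷ Y) ≫ (α_ X A Y).hom)) ≫
    (α_ A X (A ⊗ Y)).inv


def trioK (A : V) (η : 𝟙_ V ⟶ A) (X : V) : X ⟶ (A ⊗ X) ⊗ 𝟙_ V :=
  (λ_ X).inv ≫ (η ▷ X) ≫ (ρ_ (A ⊗ X)).inv

lemma trioW_eq (A : V) (v : A ⊗ A ⟶ A ⊗ A) (X Y : V) :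
    trioW A v X Y = (α_ A (A ⊗ X) Y).inv ≫ (trioU A v X ▷ Y) ≫ (α_ (A ⊗ X) A Y).hom := by
  simp only [trioW, trioU, comp_whiskerRight, Category.assoc]
  monoidal

lemma trioU_nat (A : V) (v : A ⊗ A ⟶ A ⊗ A) {X X' : V} (f : X ⟶ X') :
    (A ◁ (A ◁ f)) ≫ trioU A v X' = trioU A v X ≫ ((A ◁ f) ▷ A) := by
  simp only [trioU, associator_inv_naturality_right_assoc, whisker_exchange_assoc,
    associator_naturality_right_assoc]
  rw [← MonoidalCategory.whiskerLeft_comp_assoc, BraidedCategory.braiding_naturality_right,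
    MonoidalCategory.whiskerLeft_comp_assoc, associator_inv_naturality_middle]
  simp only [Category.assoc]

lemma trioW_nat (A : V) (v : A ⊗ A ⟶ A ⊗ A) {X X' Y Y' : V} (f : X ⟶ X') (g : Y ⟶ Y') :
    (A ◁ ((A ◁ f) ⊗ₘ g)) ≫ trioW A v X' Y' = trioW A v X Y ≫ ((A ◁ f) ⊗ₘ (A ◁ g)) := by
  rw [trioW_eq, trioW_eq, tensorHom_def ((A ◁ f)) g, tensorHom_def (A ◁ f) (A ◁ g)]
  calc (A ◁ ((A ◁ f) ▷ Y ≫ (A ⊗ X') ◁ g)) ≫ (α_ A (A ⊗ X') Y').inv ≫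
        (trioU A v X' ▷ Y') ≫ (α_ (A ⊗ X') A Y').hom
      = (α_ A (A ⊗ X) Y).inv ≫ ((A ◁ (A ◁ f)) ▷ Y) ≫ ((A ⊗ (A ⊗ X')) ◁ g) ≫
          (trioU A v X' ▷ Y') ≫ (α_ (A ⊗ X') A Y').hom := by
        simp only [MonoidalCategory.whiskerLeft_comp, Category.assoc]
        monoidal
    _ = (α_ A (A ⊗ X) Y).inv ≫ ((A ◁ (A ◁ f)) ▷ Y) ≫ (trioU A v X' ▷ Y) ≫
          ((((A ⊗ X') ⊗ A)) ◁ g) ≫ (α_ (A ⊗ X') A Y').hom := by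
        rw [whisker_exchange_assoc]
    _ = (α_ A (A ⊗ X) Y).inv ≫ (((A ◁ (A ◁ f)) ≫ trioU A v X') ▷ Y) ≫
          ((((A ⊗ X') ⊗ A)) ◁ g) ≫ (α_ (A ⊗ X') A Y').hom := by
        simp only [comp_whiskerRight, Category.assoc]
    _ = (α_ A (A ⊗ X) Y).inv ≫ ((trioU A v X ≫ ((A ◁ f) ▷ A)) ▷ Y) ≫
          ((((A ⊗ X') ⊗ A)) ◁ g) ≫ (α_ (A ⊗ X') A Y').hom := by rw [trioU_nat]
    _ = _ := by
        simp only [comp_whiskerRight, Category.assoc]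
        monoidal

lemma trioK_nat (A : V) (η : 𝟙_ V ⟶ A) {X X' : V} (f : X ⟶ X') :
    f ≫ trioK A η X' = trioK A η X ≫ ((A ◁ f) ▷ 𝟙_ V) := by
  calc f ≫ trioK A η X'
      = (λ_ X).inv ≫ ((𝟙_ V) ◁ f) ≫ (η ▷ X') ≫ (ρ_ (A ⊗ X')).inv := by
        simp only [trioK]; monoidal
    _ = (λ_ X).inv ≫ (η ▷ X) ≫ (A ◁ f) ≫ (ρ_ (A ⊗ X')).inv := by rw [whisker_exchange_assoc]
    _ = _ := by simp only [trioK, Category.assoc]; monoidal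

lemma trioW5 (A : V) (η : 𝟙_ V ⟶ A) (ε : A ⟶ 𝟙_ V) (haug4 : η ≫ ε = 𝟙 (𝟙_ V)) :
    trioK A η (𝟙_ V) ≫ (((ρ_ A).hom ≫ ε) ▷ 𝟙_ V) ≫ (λ_ (𝟙_ V)).hom = 𝟙 (𝟙_ V) := by
  calc trioK A η (𝟙_ V) ≫ (((ρ_ A).hom ≫ ε) ▷ 𝟙_ V) ≫ (λ_ (𝟙_ V)).hom
      = (λ_ (𝟙_ V)).inv ≫ ((η ≫ ε) ▷ 𝟙_ V) ≫ (λ_ (𝟙_ V)).hom := by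
        simp only [trioK, comp_whiskerRight, Category.assoc]; monoidal
    _ = 𝟙 (𝟙_ V) := by rw [haug4]; simp

-- W2

lemma trioW2 (A : V) (v : A ⊗ A ⟶ A ⊗ A) (ε : A ⟶ 𝟙_ V)
    (haug2 : v ≫ (ε ▷ A) ≫ (λ_ A).hom = (A ◁ ε) ≫ (ρ_ A).hom) (Y : V) :
    trioW A v (𝟙_ V) Y ≫ ((((ρ_ A).hom ≫ ε)) ▷ (A ⊗ Y)) ≫ (λ_ (A ⊗ Y)).hom =
      (A ◁ ((((ρ_ A).hom ≫ ε)) ▷ Y)) ≫ (A ◁ (λ_ Y).hom) := by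
  calc trioW A v (𝟙_ V) Y ≫ ((((ρ_ A).hom ≫ ε)) ▷ (A ⊗ Y)) ≫ (λ_ (A ⊗ Y)).hom
      = (A ◁ ((ρ_ A).hom ▷ Y)) ≫ (α_ A A Y).inv ≫
          ((v ≫ (ε ▷ A) ≫ (λ_ A).hom) ▷ Y) := by
        simp only [trioW, comp_whiskerRight, Category.assoc, braiding_tensorUnit_right,
          MonoidalCategory.whiskerLeft_comp]
        monoidal
    _ = (A ◁ ((ρ_ A).hom ▷ Y)) ≫ (α_ A A Y).inv ≫ (((A ◁ ε) ≫ (ρ_ A).hom) ▷ Y) := by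
        rw [haug2]
    _ = _ := by
        simp only [comp_whiskerRight, Category.assoc, MonoidalCategory.whiskerLeft_comp]
        monoidal

-- W3

lemma trioW3 (A : V) (v : A ⊗ A ⟶ A ⊗ A) (η : 𝟙_ V ⟶ A) (ε : A ⟶ 𝟙_ V)
    (haug1 : (ρ_ A).inv ≫ (A ◁ η) ≫ v ≫ (A ◁ ε) ≫ (ρ_ A).hom = 𝟙 A) (X : V) :
    (A ◁ trioK A η X) ≫ trioW A v X (𝟙_ V) ≫ ((A ⊗ X) ◁ ((ρ_ A).hom ≫ ε)) =
      (ρ_ (A ⊗ X)).inv := by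
  calc (A ◁ trioK A η X) ≫ trioW A v X (𝟙_ V) ≫ ((A ⊗ X) ◁ ((ρ_ A).hom ≫ ε))
      = ((ρ_ A).inv ▷ X) ≫ (((A ◁ η) ≫ v) ▷ X) ≫ (α_ A A X).hom ≫
          (A ◁ ((β_ A X).hom ≫ (X ◁ ε))) ≫ (A ◁ (ρ_ X).hom) ≫ (ρ_ (A ⊗ X)).inv := by
        simp only [trioW, trioK, comp_whiskerRight, Category.assoc,
          MonoidalCategory.whiskerLeft_comp]
        monoidal
    _ = ((ρ_ A).inv ▷ X) ≫ (((A ◁ η) ≫ v) ▷ X) ≫ (α_ A A X).hom ≫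
          (A ◁ ((ε ▷ X) ≫ (β_ (𝟙_ V) X).hom)) ≫ (A ◁ (ρ_ X).hom) ≫ (ρ_ (A ⊗ X)).inv := by
        rw [BraidedCategory.braiding_naturality_left]
    _ = (((ρ_ A).inv ≫ (A ◁ η) ≫ v ≫ (A ◁ ε) ≫ (ρ_ A).hom) ▷ X) ≫ (ρ_ (A ⊗ X)).inv := by
        simp only [braiding_tensorUnit_left, comp_whiskerRight, Category.assoc,
          MonoidalCategory.whiskerLeft_comp]
        monoidal
    _ = _ := by rw [haug1]; simp

-- W4

lemma trioW4 (A : V) (v : A ⊗ A ⟶ A ⊗ A) (η : 𝟙_ V ⟶ A)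
    (haug3 : (λ_ A).inv ≫ (η ▷ A) ≫ v = (ρ_ A).inv ≫ (A ◁ η)) (X Y : V) :
    trioK A η ((A ⊗ X) ⊗ Y) ≫ (trioW A v X Y ▷ 𝟙_ V) ≫
      (α_ (A ⊗ X) (A ⊗ Y) (𝟙_ V)).hom = (A ⊗ X) ◁ trioK A η Y := by
  calc trioK A η ((A ⊗ X) ⊗ Y) ≫ (trioW A v X Y ▷ 𝟙_ V) ≫ (α_ (A ⊗ X) (A ⊗ Y) (𝟙_ V)).hom
      = ((((λ_ A).inv ≫ (η ▷ A) ≫ v) ▷ X) ▷ Y) ≫ ((α_ A A X).hom ▷ Y) ≫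
          ((A ◁ (β_ A X).hom) ▷ Y) ≫ ((α_ A X A).inv ▷ Y) ≫ (α_ (A ⊗ X) A Y).hom ≫
          ((A ⊗ X) ◁ (ρ_ (A ⊗ Y)).inv) := by
        simp only [trioW, trioK, comp_whiskerRight, Category.assoc,
          MonoidalCategory.whiskerLeft_comp]
        monoidal
    _ = ((((ρ_ A).inv ≫ (A ◁ η)) ▷ X) ▷ Y) ≫ ((α_ A A X).hom ▷ Y) ≫
          ((A ◁ (β_ A X).hom) ▷ Y) ≫ ((α_ A X A).inv ▷ Y) ≫ (α_ (A ⊗ X) A Y).hom ≫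
          ((A ⊗ X) ◁ (ρ_ (A ⊗ Y)).inv) := by rw [haug3]
    _ = ((A ◁ (λ_ X).inv) ▷ Y) ≫ ((A ◁ ((η ▷ X) ≫ (β_ A X).hom)) ▷ Y) ≫
          ((α_ A X A).inv ▷ Y) ≫ (α_ (A ⊗ X) A Y).hom ≫
          ((A ⊗ X) ◁ (ρ_ (A ⊗ Y)).inv) := by
        simp only [comp_whiskerRight, Category.assoc, MonoidalCategory.whiskerLeft_comp]
        monoidal
    _ = ((A ◁ (λ_ X).inv) ▷ Y) ≫ ((A ◁ ((β_ (𝟙_ V) X).hom ≫ (X ◁ η))) ▷ Y) ≫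
          ((α_ A X A).inv ▷ Y) ≫ (α_ (A ⊗ X) A Y).hom ≫
          ((A ⊗ X) ◁ (ρ_ (A ⊗ Y)).inv) := by
        rw [BraidedCategory.braiding_naturality_left]
    _ = _ := by
        simp only [braiding_tensorUnit_left, trioK, comp_whiskerRight, Category.assoc,
          MonoidalCategory.whiskerLeft_comp]
        monoidal

lemma trioCore (A : V) (v : A ⊗ A ⟶ A ⊗ A)
    (hv : (v ▷ A) ≫ (α_ A A A).hom ≫ (A ◁ (β_ A A).hom) ≫ (α_ A A A).inv ≫ (v ▷ A) =
      (α_ A A A).hom ≫ (A ◁ v) ≫ (α_ A A A).inv ≫ (v ▷ A) ≫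
        (α_ A A A).hom ≫ (A ◁ v) ≫ (α_ A A A).inv) (X Y : V) :
    trioU A v ((A ⊗ X) ⊗ Y) ≫ (trioW A v X Y ▷ A) =
      (A ◁ trioW A v X Y) ≫ (α_ A (A ⊗ X) (A ⊗ Y)).inv ≫ (trioU A v X ▷ (A ⊗ Y)) ≫
        (α_ (A ⊗ X) A (A ⊗ Y)).hom ≫ ((A ⊗ X) ◁ trioU A v Y) ≫
        (α_ (A ⊗ X) (A ⊗ Y) A).inv := by
  calc trioU A v ((A ⊗ X) ⊗ Y) ≫ (trioW A v X Y ▷ A)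
      -- G3 : expose the hv pattern after one interchange
      = (α_ A A ((A ⊗ X) ⊗ Y)).inv ≫ (v ▷ ((A ⊗ X) ⊗ Y)) ≫ (α_ A A ((A ⊗ X) ⊗ Y)).hom ≫
          (A ◁ (A ◁ (α_ A X Y).hom)) ≫ (A ◁ (α_ A A (X ⊗ Y)).inv) ≫
          (A ◁ ((β_ A A).hom ▷ (X ⊗ Y))) ≫ (A ◁ (α_ A A (X ⊗ Y)).hom) ≫
          (α_ A A (A ⊗ (X ⊗ Y))).inv ≫ ((A ⊗ A) ◁ (β_ A (X ⊗ Y)).hom) ≫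
          (v ▷ ((X ⊗ Y) ⊗ A)) ≫
          (α_ A A ((X ⊗ Y) ⊗ A)).hom ≫ (A ◁ (α_ A (X ⊗ Y) A).inv) ≫
          (A ◁ ((α_ A X Y).inv ▷ A)) ≫ (A ◁ (((β_ A X).hom ▷ Y) ▷ A)) ≫
          (A ◁ ((α_ X A Y).hom ▷ A)) ≫ (α_ A (X ⊗ (A ⊗ Y)) A).inv ≫
          ((α_ A X (A ⊗ Y)).inv ▷ A) := by
        simp only [trioU, trioW, BraidedCategory.braiding_tensor_right_hom, comp_whiskerRight, Category.assoc,
          MonoidalCategory.whiskerLeft_comp]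
        monoidal
    _ = (α_ A A ((A ⊗ X) ⊗ Y)).inv ≫ (v ▷ ((A ⊗ X) ⊗ Y)) ≫ (α_ A A ((A ⊗ X) ⊗ Y)).hom ≫
          (A ◁ (A ◁ (α_ A X Y).hom)) ≫ (A ◁ (α_ A A (X ⊗ Y)).inv) ≫
          (A ◁ ((β_ A A).hom ▷ (X ⊗ Y))) ≫ (A ◁ (α_ A A (X ⊗ Y)).hom) ≫
          (α_ A A (A ⊗ (X ⊗ Y))).inv ≫
          (v ▷ (A ⊗ (X ⊗ Y))) ≫ ((A ⊗ A) ◁ (β_ A (X ⊗ Y)).hom) ≫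
          (α_ A A ((X ⊗ Y) ⊗ A)).hom ≫ (A ◁ (α_ A (X ⊗ Y) A).inv) ≫
          (A ◁ ((α_ A X Y).inv ▷ A)) ≫ (A ◁ (((β_ A X).hom ▷ Y) ▷ A)) ≫
          (A ◁ ((α_ X A Y).hom ▷ A)) ≫ (α_ A (X ⊗ (A ⊗ Y)) A).inv ≫
          ((α_ A X (A ⊗ Y)).inv ▷ A) := by
        rw [whisker_exchange_assoc]
    _ = (α_ A A ((A ⊗ X) ⊗ Y)).inv ≫ ((A ⊗ A) ◁ (α_ A X Y).hom) ≫
          (α_ (A ⊗ A) A (X ⊗ Y)).inv ≫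
          (((v ▷ A) ≫ (α_ A A A).hom ≫ (A ◁ (β_ A A).hom) ≫ (α_ A A A).inv ≫ (v ▷ A)) ▷
            (X ⊗ Y)) ≫
          (α_ (A ⊗ A) A (X ⊗ Y)).hom ≫ ((A ⊗ A) ◁ (β_ A (X ⊗ Y)).hom) ≫
          (α_ A A ((X ⊗ Y) ⊗ A)).hom ≫ (A ◁ (α_ A (X ⊗ Y) A).inv) ≫
          (A ◁ ((α_ A X Y).inv ▷ A)) ≫ (A ◁ (((β_ A X).hom ▷ Y) ▷ A)) ≫
          (A ◁ ((α_ X A Y).hom ▷ A)) ≫ (α_ A (X ⊗ (A ⊗ Y)) A).inv ≫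
          ((α_ A X (A ⊗ Y)).inv ▷ A) := by
        simp only [comp_whiskerRight, Category.assoc]
        monoidal
    _ = (α_ A A ((A ⊗ X) ⊗ Y)).inv ≫ ((A ⊗ A) ◁ (α_ A X Y).hom) ≫
          (α_ (A ⊗ A) A (X ⊗ Y)).inv ≫
          (((α_ A A A).hom ≫ (A ◁ v) ≫ (α_ A A A).inv ≫ (v ▷ A) ≫
            (α_ A A A).hom ≫ (A ◁ v) ≫ (α_ A A A).inv) ▷ (X ⊗ Y)) ≫
          (α_ (A ⊗ A) A (X ⊗ Y)).hom ≫ ((A ⊗ A) ◁ (β_ A (X ⊗ Y)).hom) ≫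
          (α_ A A ((X ⊗ Y) ⊗ A)).hom ≫ (A ◁ (α_ A (X ⊗ Y) A).inv) ≫
          (A ◁ ((α_ A X Y).inv ▷ A)) ≫ (A ◁ (((β_ A X).hom ▷ Y) ▷ A)) ≫
          (A ◁ ((α_ X A Y).hom ▷ A)) ≫ (α_ A (X ⊗ (A ⊗ Y)) A).inv ≫
          ((α_ A X (A ⊗ Y)).inv ▷ A) := by
        rw [hv]
      -- G5 : split the big braiding, adjacentize the commuting pair
    _ = (α_ A A ((A ⊗ X) ⊗ Y)).inv ≫ ((A ⊗ A) ◁ (α_ A X Y).hom) ≫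
          (α_ (A ⊗ A) A (X ⊗ Y)).inv ≫
          (((α_ A A A).hom ≫ (A ◁ v) ≫ (α_ A A A).inv ≫ (v ▷ A) ≫
            (α_ A A A).hom ≫ (A ◁ v) ≫ (α_ A A A).inv) ▷ (X ⊗ Y)) ≫
          (α_ (A ⊗ A) A (X ⊗ Y)).hom ≫
          ((A ⊗ A) ◁ ((α_ A X Y).inv ≫ ((β_ A X).hom ▷ Y) ≫ (α_ X A Y).hom)) ≫
          (α_ A A (X ⊗ (A ⊗ Y))).hom ≫ (A ◁ (α_ A X (A ⊗ Y)).inv) ≫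
          (α_ A (A ⊗ X) (A ⊗ Y)).inv ≫
          ((A ⊗ (A ⊗ X)) ◁ (β_ A Y).hom) ≫ ((A ◁ (β_ A X).hom) ▷ (Y ⊗ A)) ≫
          ((α_ A X A).inv ▷ (Y ⊗ A)) ≫ (α_ (A ⊗ X) A (Y ⊗ A)).hom ≫
          ((A ⊗ X) ◁ (α_ A Y A).inv) ≫ (α_ (A ⊗ X) (A ⊗ Y) A).inv := by
        simp only [BraidedCategory.braiding_tensor_right_hom, comp_whiskerRight, Category.assoc,
          MonoidalCategory.whiskerLeft_comp]
        monoidal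
    _ = (α_ A A ((A ⊗ X) ⊗ Y)).inv ≫ ((A ⊗ A) ◁ (α_ A X Y).hom) ≫
          (α_ (A ⊗ A) A (X ⊗ Y)).inv ≫
          (((α_ A A A).hom ≫ (A ◁ v) ≫ (α_ A A A).inv ≫ (v ▷ A) ≫
            (α_ A A A).hom ≫ (A ◁ v) ≫ (α_ A A A).inv) ▷ (X ⊗ Y)) ≫
          (α_ (A ⊗ A) A (X ⊗ Y)).hom ≫
          ((A ⊗ A) ◁ ((α_ A X Y).inv ≫ ((β_ A X).hom ▷ Y) ≫ (α_ X A Y).hom)) ≫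
          (α_ A A (X ⊗ (A ⊗ Y))).hom ≫ (A ◁ (α_ A X (A ⊗ Y)).inv) ≫
          (α_ A (A ⊗ X) (A ⊗ Y)).inv ≫
          ((A ◁ (β_ A X).hom) ▷ (A ⊗ Y)) ≫ ((A ⊗ (X ⊗ A)) ◁ (β_ A Y).hom) ≫
          ((α_ A X A).inv ▷ (Y ⊗ A)) ≫ (α_ (A ⊗ X) A (Y ⊗ A)).hom ≫
          ((A ⊗ X) ◁ (α_ A Y A).inv) ≫ (α_ (A ⊗ X) (A ⊗ Y) A).inv := by
        rw [whisker_exchange_assoc]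
      -- G7 : expose the naturality pair
    _ = (A ◁ (A ◁ (α_ A X Y).hom)) ≫ (A ◁ (α_ A A (X ⊗ Y)).inv) ≫ (A ◁ (v ▷ (X ⊗ Y))) ≫
          (α_ A (A ⊗ A) (X ⊗ Y)).inv ≫ ((α_ A A A).inv ▷ (X ⊗ Y)) ≫
          ((v ▷ A) ▷ (X ⊗ Y)) ≫ ((α_ A A A).hom ▷ (X ⊗ Y)) ≫
          (α_ A (A ⊗ A) (X ⊗ Y)).hom ≫ (A ◁ (α_ (A ⊗ A) X Y).inv) ≫
          (A ◁ ((v ▷ X ≫ (β_ (A ⊗ A) X).hom) ▷ Y)) ≫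
          (A ◁ (α_ X (A ⊗ A) Y).hom) ≫ (A ◁ (X ◁ (α_ A A Y).hom)) ≫
          (A ◁ (X ◁ (A ◁ (β_ A Y).hom))) ≫ (α_ A X (A ⊗ (Y ⊗ A))).inv ≫
          ((A ⊗ X) ◁ (α_ A Y A).inv) ≫ (α_ (A ⊗ X) (A ⊗ Y) A).inv := by
        simp only [BraidedCategory.braiding_tensor_left_hom, comp_whiskerRight, Category.assoc,
          MonoidalCategory.whiskerLeft_comp]
        monoidal
    _ = (A ◁ (A ◁ (α_ A X Y).hom)) ≫ (A ◁ (α_ A A (X ⊗ Y)).inv) ≫ (A ◁ (v ▷ (X ⊗ Y))) ≫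
          (α_ A (A ⊗ A) (X ⊗ Y)).inv ≫ ((α_ A A A).inv ▷ (X ⊗ Y)) ≫
          ((v ▷ A) ▷ (X ⊗ Y)) ≫ ((α_ A A A).hom ▷ (X ⊗ Y)) ≫
          (α_ A (A ⊗ A) (X ⊗ Y)).hom ≫ (A ◁ (α_ (A ⊗ A) X Y).inv) ≫
          (A ◁ (((β_ (A ⊗ A) X).hom ≫ (X ◁ v)) ▷ Y)) ≫
          (A ◁ (α_ X (A ⊗ A) Y).hom) ≫ (A ◁ (X ◁ (α_ A A Y).hom)) ≫
          (A ◁ (X ◁ (A ◁ (β_ A Y).hom))) ≫ (α_ A X (A ⊗ (Y ⊗ A))).inv ≫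
          ((A ⊗ X) ◁ (α_ A Y A).inv) ≫ (α_ (A ⊗ X) (A ⊗ Y) A).inv := by
        rw [BraidedCategory.braiding_naturality_left]
      -- G9 : adjacentize the last commuting pair
    _ = (A ◁ (A ◁ (α_ A X Y).hom)) ≫ (A ◁ (α_ A A (X ⊗ Y)).inv) ≫ (A ◁ (v ▷ (X ⊗ Y))) ≫
          (A ◁ (α_ A A (X ⊗ Y)).hom) ≫ (α_ A A (A ⊗ (X ⊗ Y))).inv ≫
          (v ▷ (A ⊗ (X ⊗ Y))) ≫
          ((A ⊗ A) ◁ ((α_ A X Y).inv ≫ ((β_ A X).hom ▷ Y) ≫ (α_ X A Y).hom)) ≫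
          (α_ A A (X ⊗ (A ⊗ Y))).hom ≫ (A ◁ (α_ A X (A ⊗ Y)).inv) ≫
          (A ◁ ((β_ A X).hom ▷ (A ⊗ Y))) ≫ (A ◁ (α_ X A (A ⊗ Y)).hom) ≫
          (α_ A X (A ⊗ (A ⊗ Y))).inv ≫ ((A ⊗ X) ◁ (α_ A A Y).inv) ≫
          ((A ⊗ X) ◁ (v ▷ Y)) ≫ ((A ⊗ X) ◁ (α_ A A Y).hom) ≫
          ((A ⊗ X) ◁ (A ◁ (β_ A Y).hom)) ≫ ((A ⊗ X) ◁ (α_ A Y A).inv) ≫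
          (α_ (A ⊗ X) (A ⊗ Y) A).inv := by
        simp only [BraidedCategory.braiding_tensor_left_hom, comp_whiskerRight, Category.assoc,
          MonoidalCategory.whiskerLeft_comp]
        monoidal
    _ = (A ◁ (A ◁ (α_ A X Y).hom)) ≫ (A ◁ (α_ A A (X ⊗ Y)).inv) ≫ (A ◁ (v ▷ (X ⊗ Y))) ≫
          (A ◁ (α_ A A (X ⊗ Y)).hom) ≫ (α_ A A (A ⊗ (X ⊗ Y))).inv ≫
          ((A ⊗ A) ◁ ((α_ A X Y).inv ≫ ((β_ A X).hom ▷ Y) ≫ (α_ X A Y).hom)) ≫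
          (v ▷ (X ⊗ (A ⊗ Y))) ≫
          (α_ A A (X ⊗ (A ⊗ Y))).hom ≫ (A ◁ (α_ A X (A ⊗ Y)).inv) ≫
          (A ◁ ((β_ A X).hom ▷ (A ⊗ Y))) ≫ (A ◁ (α_ X A (A ⊗ Y)).hom) ≫
          (α_ A X (A ⊗ (A ⊗ Y))).inv ≫ ((A ⊗ X) ◁ (α_ A A Y).inv) ≫
          ((A ⊗ X) ◁ (v ▷ Y)) ≫ ((A ⊗ X) ◁ (α_ A A Y).hom) ≫
          ((A ⊗ X) ◁ (A ◁ (β_ A Y).hom)) ≫ ((A ⊗ X) ◁ (α_ A Y A).inv) ≫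
          (α_ (A ⊗ X) (A ⊗ Y) A).inv := by
        rw [← whisker_exchange_assoc]
    _ = _ := by
        simp only [trioU, trioW, comp_whiskerRight, Category.assoc,
          MonoidalCategory.whiskerLeft_comp]
        monoidal

lemma trioW1 (A : V) (v : A ⊗ A ⟶ A ⊗ A)
    (hv : (v ▷ A) ≫ (α_ A A A).hom ≫ (A ◁ (β_ A A).hom) ≫ (α_ A A A).inv ≫ (v ▷ A) =
      (α_ A A A).hom ≫ (A ◁ v) ≫ (α_ A A A).inv ≫ (v ▷ A) ≫
        (α_ A A A).hom ≫ (A ◁ v) ≫ (α_ A A A).inv) (X Y Z : V) :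
    trioW A v ((A ⊗ X) ⊗ Y) Z ≫ (trioW A v X Y ▷ (A ⊗ Z)) ≫
        (α_ (A ⊗ X) (A ⊗ Y) (A ⊗ Z)).hom =
      (A ◁ (trioW A v X Y ▷ Z)) ≫ (A ◁ (α_ (A ⊗ X) (A ⊗ Y) Z).hom) ≫
        trioW A v X ((A ⊗ Y) ⊗ Z) ≫ ((A ⊗ X) ◁ trioW A v Y Z) := by
  calc trioW A v ((A ⊗ X) ⊗ Y) Z ≫ (trioW A v X Y ▷ (A ⊗ Z)) ≫
        (α_ (A ⊗ X) (A ⊗ Y) (A ⊗ Z)).hom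
      = (α_ A (A ⊗ ((A ⊗ X) ⊗ Y)) Z).inv ≫
          ((trioU A v ((A ⊗ X) ⊗ Y) ≫ (trioW A v X Y ▷ A)) ▷ Z) ≫
          (α_ ((A ⊗ X) ⊗ (A ⊗ Y)) A Z).hom ≫
          (α_ (A ⊗ X) (A ⊗ Y) (A ⊗ Z)).hom := by
        rw [trioW_eq A v ((A ⊗ X) ⊗ Y) Z]
        simp only [comp_whiskerRight, Category.assoc]
        monoidal
    _ = (α_ A (A ⊗ ((A ⊗ X) ⊗ Y)) Z).inv ≫
          (((A ◁ trioW A v X Y) ≫ (α_ A (A ⊗ X) (A ⊗ Y)).inv ≫ (trioU A v X ▷ (A ⊗ Y)) ≫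
            (α_ (A ⊗ X) A (A ⊗ Y)).hom ≫ ((A ⊗ X) ◁ trioU A v Y) ≫
            (α_ (A ⊗ X) (A ⊗ Y) A).inv) ▷ Z) ≫
          (α_ ((A ⊗ X) ⊗ (A ⊗ Y)) A Z).hom ≫
          (α_ (A ⊗ X) (A ⊗ Y) (A ⊗ Z)).hom := by
        rw [trioCore A v hv X Y]
    _ = _ := by
        rw [trioW_eq A v X ((A ⊗ Y) ⊗ Z), trioW_eq A v Y Z]
        simp only [comp_whiskerRight, Category.assoc, MonoidalCategory.whiskerLeft_comp]
        monoidal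

end TrioAux

/-- The functor `T = A ⊗ −`. -/
def tensorLeftF (A : V) : V ⥤ V where
  obj X := A ⊗ X
  map f := A ◁ f

/-- An augmented lax tricocycloid `(A, v, η, ε)` in a braided monoidal
category `V` determines a skew left warping of `V` with `T = A ⊗ −`, `K = I`,
`v_{X,Y} = (1_A ⊗ c_{A,X} ⊗ 1_Y) ∘ (v ⊗ 1_X ⊗ 1_Y)`, `v₀ = ε` (composed with the unit
isomorphism) and `k_X = η ⊗ 1_X` (composed with the unit isomorphism). -/
theorem augmented_tricocycloid_skew_left_warping (A : V) (v : A ⊗ A ⟶ A ⊗ A)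
    (η : 𝟙_ V ⟶ A) (ε : A ⟶ 𝟙_ V)
    (hv : (v ▷ A) ≫ (α_ A A A).hom ≫ (A ◁ (β_ A A).hom) ≫ (α_ A A A).inv ≫ (v ▷ A) =
      (α_ A A A).hom ≫ (A ◁ v) ≫ (α_ A A A).inv ≫ (v ▷ A) ≫
        (α_ A A A).hom ≫ (A ◁ v) ≫ (α_ A A A).inv)
    (haug1 : (ρ_ A).inv ≫ (A ◁ η) ≫ v ≫ (A ◁ ε) ≫ (ρ_ A).hom = 𝟙 A)
    (haug2 : v ≫ (ε ▷ A) ≫ (λ_ A).hom = (A ◁ ε) ≫ (ρ_ A).hom)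
    (haug3 : (λ_ A).inv ≫ (η ▷ A) ≫ v = (ρ_ A).inv ≫ (A ◁ η))
    (haug4 : η ≫ ε = 𝟙 (𝟙_ V)) :
    IsSkewLeftWarping (tensorLeftF A) (𝟙_ V)
      (fun X Y =>
        (A ◁ (α_ A X Y).hom) ≫ (α_ A A (X ⊗ Y)).inv ≫ (v ▷ (X ⊗ Y)) ≫
          (α_ A A (X ⊗ Y)).hom ≫
          (A ◁ ((α_ A X Y).inv ≫ ((β_ A X).hom ▷ Y) ≫ (α_ X A Y).hom)) ≫
          (α_ A X (A ⊗ Y)).inv)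
      ((ρ_ A).hom ≫ ε)
      (fun X => (λ_ X).inv ≫ (η ▷ X) ≫ (ρ_ (A ⊗ X)).inv) := by
  dsimp only [tensorLeftF]
  refine ⟨?_, ?_, ?_, ?_, ?_, ?_, ?_⟩
  · exact fun X X' Y Y' f g => trioW_nat A v f g
  · exact fun X X' f => trioK_nat A η f
  · exact fun X Y Z => trioW1 A v hv X Y Z
  · exact fun Y => trioW2 A v ε haug2 Y
  · exact fun X => trioW3 A v η ε haug1 X
  · exact fun X Y => trioW4 A v η haug3 X Y
  · exact trioW5 A η ε haug4
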